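/- Let N ≥ 1, 1 ≤ p < ∞, ρ > 0, and let u ∈ L^p(ℝ^N) be nonnegative. If u^H = u almost everywhere for every closed halfspace H ⊂ ℝ^N with 0 ∈ H whose boundary hyperplane ∂H intersects the ball B(0, ρ), then u = u* almost everywhere, where u* is the symmetric decreasing rearrangement of u. -/

import Mathlib

open MeasureTheory Filter

/-- Reflection across the boundary hyperplane `{x : ⟪a,x⟫ = b}` of the closed
halfspace `H = {x : ⟪a,x⟫ ≤ b}` (for `‖a‖ = 1`). -/
noncomputable def reflectH {N : ℕ} (a : EuclideanSpace ℝ (Fin N)) (b : ℝ)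
    (x : EuclideanSpace ℝ (Fin N)) : EuclideanSpace ℝ (Fin N) :=
  x - (2 * ((inner ℝ a x : ℝ) - b)) • a

/-- Polarization (two-point rearrangement) of `u` with respect to the closed halfspace
`H = {x : ⟪a,x⟫ ≤ b}` (for `‖a‖ = 1`). -/
noncomputable def polarization {N : ℕ} (a : EuclideanSpace ℝ (Fin N)) (b : ℝ)
    (u : EuclideanSpace ℝ (Fin N) → ℝ) (x : EuclideanSpace ℝ (Fin N)) : ℝ :=
  if (inner ℝ a x : ℝ) ≤ b then max (u x) (u (reflectH a b x))
  else min (u x) (u (reflectH a b x))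

/-- The symmetric decreasing rearrangement (Schwarz symmetrization) of `u`:
`u⋆ x = sup {l > 0 : vol {u > l} > vol (B(0,‖x‖))}`, with `sup ∅ = 0`. -/
noncomputable def schwarz {N : ℕ} (u : EuclideanSpace ℝ (Fin N) → ℝ)
    (x : EuclideanSpace ℝ (Fin N)) : ℝ :=
  sSup {l : ℝ | 0 < l ∧
    volume (Metric.ball (0 : EuclideanSpace ℝ (Fin N)) ‖x‖) < volume {y | l < u y}}

section Helpers
open Topology Metric Set ENNReal
variable {N : ℕ} {ρ : ℝ} {u : EuclideanSpace ℝ (Fin N) → ℝ}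


lemma inner_self_one {a : EuclideanSpace ℝ (Fin N)} (ha : ‖a‖ = 1) : (inner ℝ a a : ℝ) = 1 := by
  rw [real_inner_self_eq_norm_sq, ha]; norm_num

lemma inner_reflectH (a : EuclideanSpace ℝ (Fin N)) (b : ℝ) (ha : ‖a‖ = 1) (x) :
    (inner ℝ a (reflectH a b x) : ℝ) = 2*b - inner ℝ a x := by
  rw [reflectH, inner_sub_right, real_inner_smul_right, inner_self_one ha]
  ring

lemma norm_reflLin (a : EuclideanSpace ℝ (Fin N)) (ha : ‖a‖ = 1) (v : EuclideanSpace ℝ (Fin N)) :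
    ‖v - (2 * (inner ℝ a v : ℝ)) • a‖ = ‖v‖ := by
  have h2 : ‖v - (2 * (inner ℝ a v : ℝ)) • a‖^2 = ‖v‖^2 := by
    rw [norm_sub_sq_real, real_inner_smul_right, norm_smul, real_inner_comm]
    rw [ha, Real.norm_eq_abs, mul_one, sq_abs]
    ring
  have := congrArg Real.sqrt h2
  rwa [Real.sqrt_sq (norm_nonneg _), Real.sqrt_sq (norm_nonneg _)] at this

lemma reflectH_sub (a : EuclideanSpace ℝ (Fin N)) (b : ℝ) (x y) :
    reflectH a b x - reflectH a b y = (x - y) - (2 * (inner ℝ a (x - y) : ℝ)) • a := by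
  rw [reflectH, reflectH, inner_sub_right]
  have : (2 * ((inner ℝ a x : ℝ) - (inner ℝ a y : ℝ))) • a
      = (2 * ((inner ℝ a x : ℝ) - b)) • a - (2 * ((inner ℝ a y : ℝ) - b)) • a := by
    rw [← sub_smul]; ring_nf
  rw [this]
  abel

lemma isometry_reflectH (a : EuclideanSpace ℝ (Fin N)) (b : ℝ) (ha : ‖a‖ = 1) :
    Isometry (reflectH a b) := by
  apply Isometry.of_dist_eq
  intro x y
  rw [dist_eq_norm, dist_eq_norm, reflectH_sub, norm_reflLin a ha]

lemma reflectH_involutive (a : EuclideanSpace ℝ (Fin N)) (b : ℝ) (ha : ‖a‖ = 1) (x) :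
    reflectH a b (reflectH a b x) = x := by
  conv_lhs => rw [reflectH]
  rw [inner_reflectH a b ha x]
  rw [reflectH]
  have : (2 * (2 * b - (inner ℝ a x : ℝ) - b)) • a = (2*(b - (inner ℝ a x:ℝ))) • a := by ring_nf
  rw [this]
  have : (2 * ((inner ℝ a x : ℝ) - b)) • a + (2*(b - (inner ℝ a x:ℝ))) • a = 0 := by
    rw [← add_smul]; ring_nf; exact zero_smul ℝ a
  rw [sub_sub, this, sub_zero]


noncomputable def reflLIE (a : EuclideanSpace ℝ (Fin N)) (ha : ‖a‖ = 1) :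
    EuclideanSpace ℝ (Fin N) ≃ₗᵢ[ℝ] EuclideanSpace ℝ (Fin N) where
  toFun := fun x => x - (2 * (inner ℝ a x : ℝ)) • a
  map_add' := by
    intro x y
    show (x + y) - (2 * (inner ℝ a (x + y) : ℝ)) • a = (x - (2 * (inner ℝ a x : ℝ)) • a) + (y - (2 * (inner ℝ a y : ℝ)) • a)
    rw [inner_add_right]
    have : (2 * ((inner ℝ a x : ℝ) + (inner ℝ a y : ℝ))) • a
        = (2 * (inner ℝ a x : ℝ)) • a + (2 * (inner ℝ a y : ℝ)) • a := by
      rw [← add_smul]; ring_nf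
    rw [this]; abel
  map_smul' := by
    intro c x
    simp only [RingHom.id_apply]
    show (c • x) - (2 * (inner ℝ a (c • x) : ℝ)) • a = c • (x - (2 * (inner ℝ a x : ℝ)) • a)
    rw [real_inner_smul_right]
    rw [smul_sub, smul_smul]
    ring_nf
  invFun := fun x => x - (2 * (inner ℝ a x : ℝ)) • a
  left_inv := by
    intro x
    simp only
    rw [inner_sub_right, real_inner_smul_right, inner_self_one ha]
    have : (2 * ((inner ℝ a x : ℝ) - 2 * (inner ℝ a x : ℝ) * 1)) • a = -((2 * (inner ℝ a x : ℝ)) • a) := by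
      rw [← neg_smul]; ring_nf
    rw [this]; abel
  right_inv := by
    intro x
    simp only
    rw [inner_sub_right, real_inner_smul_right, inner_self_one ha]
    have : (2 * ((inner ℝ a x : ℝ) - 2 * (inner ℝ a x : ℝ) * 1)) • a = -((2 * (inner ℝ a x : ℝ)) • a) := by
      rw [← neg_smul]; ring_nf
    rw [this]; abel
  norm_map' := norm_reflLin a ha

lemma measurePreserving_reflectH (a : EuclideanSpace ℝ (Fin N)) (b : ℝ) (ha : ‖a‖ = 1) :
    MeasurePreserving (reflectH a b) volume volume := by
  have h1 : reflectH a b = (fun y => y + (2*b) • a) ∘ (reflLIE a ha) := by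
    funext x
    show reflectH a b x = (reflLIE a ha) x + (2*b) • a
    rw [reflectH]
    show x - (2 * ((inner ℝ a x : ℝ) - b)) • a = x - (2 * (inner ℝ a x : ℝ)) • a + (2*b) • a
    have : (2 * ((inner ℝ a x : ℝ) - b)) • a = (2 * (inner ℝ a x : ℝ)) • a - (2*b) • a := by
      rw [← sub_smul]; ring_nf
    rw [this]; abel
  rw [h1]
  exact (measurePreserving_add_right volume ((2*b) • a)).comp (reflLIE a ha).measurePreserving


-- (assume previous lemmas; use axioms as placeholders for speed of iteration)
lemma ae_comp_mp {T : EuclideanSpace ℝ (Fin N) → EuclideanSpace ℝ (Fin N)}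
    (hT : MeasurePreserving T volume volume) {P : EuclideanSpace ℝ (Fin N) → Prop}
    (h : ∀ᵐ w ∂volume, P w) : ∀ᵐ z ∂volume, P (T z) := by
  rw [ae_iff] at h ⊢
  exact hT.quasiMeasurePreserving.preimage_null h

def Reach (E : Set (EuclideanSpace ℝ (Fin N))) (x y : EuclideanSpace ℝ (Fin N)) : Prop :=
  ∃ T : EuclideanSpace ℝ (Fin N) → EuclideanSpace ℝ (Fin N), ∃ ε : ℝ, 0 < ε ∧
    MeasurePreserving T volume volume ∧ Isometry T ∧ T x = y ∧
    ∀ᵐ z ∂volume, z ∈ ball x ε → z ∈ E → T z ∈ E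

lemma reach_refl (E : Set (EuclideanSpace ℝ (Fin N))) (x) : Reach E x x :=
  ⟨id, 1, one_pos, MeasurePreserving.id volume, isometry_id, rfl,
    Filter.Eventually.of_forall fun _ _ h => h⟩

lemma reach_trans {E : Set (EuclideanSpace ℝ (Fin N))} {x y z}
    (h1 : Reach E x y) (h2 : Reach E y z) : Reach E x z := by
  obtain ⟨T1, e1, he1, hm1, hi1, hx1, hae1⟩ := h1
  obtain ⟨T2, e2, he2, hm2, hi2, hx2, hae2⟩ := h2
  refine ⟨T2 ∘ T1, min e1 e2, lt_min he1 he2, hm2.comp hm1, hi2.comp hi1, by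
    simp [Function.comp, hx1, hx2], ?_⟩
  have hae2' := ae_comp_mp hm1 hae2
  filter_upwards [hae1, hae2'] with w hw1 hw2 hball hE
  have hb1 : w ∈ ball x e1 := mem_of_subset_of_mem (ball_subset_ball (min_le_left _ _)) hball
  have hT1w : T1 w ∈ E := hw1 hb1 hE
  have hT1ball : T1 w ∈ ball y e2 := by
    rw [mem_ball] at hball ⊢
    rw [← hx1]
    calc dist (T1 w) (T1 x) = dist w x := hi1.dist_eq w x
    _ < min e1 e2 := hball
    _ ≤ e2 := min_le_right _ _
  exact hw2 hT1ball hT1w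


section steps
variable {E : Set (EuclideanSpace ℝ (Fin N))} {ρ : ℝ}

lemma reach_of_refl0
    (hA : ∀ a : EuclideanSpace ℝ (Fin N), ‖a‖ = 1 →
      ∀ᵐ x ∂volume, (x ∈ E ↔ reflectH a 0 x ∈ E))
    (a : EuclideanSpace ℝ (Fin N)) (ha : ‖a‖ = 1) (x) :
    Reach E x (reflectH a 0 x) := by
  refine ⟨reflectH a 0, 1, one_pos, measurePreserving_reflectH a 0 ha,
    isometry_reflectH a 0 ha, rfl, ?_⟩
  filter_upwards [hA a ha] with w hw _ hE
  exact hw.1 hE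

lemma norm_eq_refl_aux {x y : EuclideanSpace ℝ (Fin N)} (hxy : x ≠ y) (hn : ‖x‖ = ‖y‖) :
    ∃ a : EuclideanSpace ℝ (Fin N), ‖a‖ = 1 ∧ reflectH a 0 x = y := by
  set w := x - y with hw
  have hw0 : w ≠ 0 := sub_ne_zero.2 hxy
  have hwn : ‖w‖ ≠ 0 := norm_ne_zero_iff.2 hw0
  refine ⟨‖w‖⁻¹ • w, ?_, ?_⟩
  · rw [norm_smul, Real.norm_eq_abs, abs_inv, abs_norm]
    field_simp
  · rw [reflectH]
    have h1 : (inner ℝ (‖w‖⁻¹ • w) x : ℝ) = ‖w‖⁻¹ * (inner ℝ w x : ℝ) := real_inner_smul_left w x _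
    rw [h1, sub_zero, smul_smul]
    have h2 : (2 : ℝ) * (inner ℝ w x : ℝ) = ‖w‖^2 := by
      have hns : ‖w‖^2 = ‖x‖^2 - 2 * (inner ℝ x y : ℝ) + ‖y‖^2 := norm_sub_sq_real x y
      have h3 : (inner ℝ w x : ℝ) = ‖x‖^2 - (inner ℝ x y : ℝ) := by
        rw [hw, inner_sub_left, real_inner_self_eq_norm_sq, real_inner_comm]
      rw [h3, hns, hn]; ring
    have : (2 * (‖w‖⁻¹ * (inner ℝ w x:ℝ)) * ‖w‖⁻¹) = 1 := by
      have : (2:ℝ) * (‖w‖⁻¹ * (inner ℝ w x:ℝ)) * ‖w‖⁻¹ = (2 * (inner ℝ w x:ℝ)) * (‖w‖⁻¹ * ‖w‖⁻¹) := by ring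
      rw [this, h2]
      rw [pow_two]
      field_simp
    rw [this, one_smul, hw]
    abel

lemma reach_of_norm_eq
    (hA : ∀ a : EuclideanSpace ℝ (Fin N), ‖a‖ = 1 →
      ∀ᵐ x ∂volume, (x ∈ E ↔ reflectH a 0 x ∈ E))
    {x y : EuclideanSpace ℝ (Fin N)} (hn : ‖x‖ = ‖y‖) : Reach E x y := by
  rcases eq_or_ne x y with rfl | hxy
  · exact reach_refl E x
  · obtain ⟨a, ha, hr⟩ := norm_eq_refl_aux hxy hn
    rw [← hr]
    exact reach_of_refl0 hA a ha x

lemma reach_far_step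
    (hB : ∀ (a : EuclideanSpace ℝ (Fin N)) (b : ℝ), ‖a‖ = 1 → 0 < b → b < ρ →
      ∀ᵐ x ∂volume, b < (inner ℝ a x : ℝ) → x ∈ E → reflectH a b x ∈ E)
    {a : EuclideanSpace ℝ (Fin N)} {b : ℝ} (ha : ‖a‖ = 1) (hb0 : 0 < b) (hbρ : b < ρ)
    {x : EuclideanSpace ℝ (Fin N)} (hx : b < (inner ℝ a x : ℝ)) :
    Reach E x (reflectH a b x) := by
  refine ⟨reflectH a b, (inner ℝ a x : ℝ) - b, by linarith, measurePreserving_reflectH a b ha,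
    isometry_reflectH a b ha, rfl, ?_⟩
  filter_upwards [hB a b ha hb0 hbρ] with w hw hball hE
  refine hw ?_ hE
  have hc : |(inner ℝ a (w - x) : ℝ)| ≤ ‖w - x‖ := by
    calc |(inner ℝ a (w - x) : ℝ)| ≤ ‖a‖ * ‖w - x‖ := abs_real_inner_le_norm a (w - x)
    _ = ‖w - x‖ := by rw [ha, one_mul]
  have hdist : ‖w - x‖ < (inner ℝ a x : ℝ) - b := by
    rw [mem_ball, dist_eq_norm] at hball; exact hball
  have hsplit : (inner ℝ a w : ℝ) = (inner ℝ a x : ℝ) + (inner ℝ a (w - x) : ℝ) := by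
    rw [inner_sub_right]; ring
  have := neg_abs_le ((inner ℝ a (w - x) : ℝ))
  linarith [abs_le.1 hc]

lemma reflectH_smul_line {e : EuclideanSpace ℝ (Fin N)} (he : ‖e‖ = 1) (b s : ℝ) :
    reflectH e b (s • e) = (2*b - s) • e := by
  rw [reflectH, real_inner_smul_right, inner_self_one he]
  rw [← sub_smul]
  congr 1
  ring

lemma inner_smul_line {e : EuclideanSpace ℝ (Fin N)} (he : ‖e‖ = 1) (s : ℝ) :
    (inner ℝ e (s • e) : ℝ) = s := by
  rw [real_inner_smul_right, inner_self_one he, mul_one]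

section chain
variable {E : Set (EuclideanSpace ℝ (Fin N))} {ρ : ℝ}
variable (hA : ∀ a : EuclideanSpace ℝ (Fin N), ‖a‖ = 1 →
      ∀ᵐ x ∂volume, (x ∈ E ↔ reflectH a 0 x ∈ E))
variable (hB : ∀ (a : EuclideanSpace ℝ (Fin N)) (b : ℝ), ‖a‖ = 1 → 0 < b → b < ρ →
      ∀ᵐ x ∂volume, b < (inner ℝ a x : ℝ) → x ∈ E → reflectH a b x ∈ E)

include hA hB

lemma reach_line_step (hρ : 0 < ρ) {e : EuclideanSpace ℝ (Fin N)} (he : ‖e‖ = 1)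
    {s t : ℝ} (ht : 0 ≤ t) (hts : t < s) (hstep : s - t < 2 * ρ) :
    Reach E (s • e) (t • e) := by
  set b : ℝ := (s - t) / 2 with hbdef
  have hb0 : 0 < b := by rw [hbdef]; linarith
  have hbρ : b < ρ := by rw [hbdef]; linarith
  have hfar : b < (inner ℝ e (s • e) : ℝ) := by rw [inner_smul_line he]; rw [hbdef]; linarith
  have h1 : Reach E (s • e) ((2*b - s) • e) := by
    rw [← reflectH_smul_line he b s]
    exact reach_far_step hB he hb0 hbρ hfar
  have h2b : (2*b - s) = -t := by rw [hbdef]; ring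
  rw [h2b] at h1
  refine reach_trans h1 (reach_of_norm_eq hA ?_)
  rw [norm_smul, norm_smul]
  simp

lemma reach_line (hρ : 0 < ρ) {e : EuclideanSpace ℝ (Fin N)} (he : ‖e‖ = 1) :
    ∀ (n : ℕ) {s t : ℝ}, 0 ≤ t → t < s → s - t ≤ n * ρ → Reach E (s • e) (t • e) := by
  intro n
  induction n with
  | zero => intro s t ht hts hle; exfalso; simp at hle; linarith
  | succ n ih =>
    intro s t ht hts hle
    by_cases hcase : s - t < 2 * ρ
    · exact reach_line_step hA hB hρ he ht hts hcase
    · push_neg at hcase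
      have h1 : Reach E (s • e) ((s - ρ) • e) := by
        apply reach_line_step hA hB hρ he (by linarith) (by linarith) (by linarith)
      refine reach_trans h1 (ih ht (by linarith) ?_)
      push_cast at hle ⊢
      linarith

lemma reach_of_norm_lt (hρ : 0 < ρ) (hN : 1 ≤ N) {x y : EuclideanSpace ℝ (Fin N)}
    (hxy : ‖y‖ < ‖x‖) : Reach E x y := by
  set e : EuclideanSpace ℝ (Fin N) := EuclideanSpace.single (⟨0, hN⟩ : Fin N) (1:ℝ) with he_def
  have he : ‖e‖ = 1 := by rw [he_def, EuclideanSpace.norm_single]; norm_num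
  have h1 : Reach E x (‖x‖ • e) := by
    apply reach_of_norm_eq hA
    rw [norm_smul, he, Real.norm_eq_abs, abs_norm, mul_one]
  have h3 : Reach E (‖y‖ • e) y := by
    apply reach_of_norm_eq hA
    rw [norm_smul, he, Real.norm_eq_abs, abs_norm, mul_one]
  refine reach_trans (reach_trans h1 ?_) h3
  obtain ⟨n, hn⟩ := exists_nat_ge ((‖x‖ - ‖y‖) / ρ)
  apply reach_line hA hB hρ he n (norm_nonneg y) hxy
  rw [div_le_iff₀ hρ] at hn
  linarith

end chain
end steps


lemma nontrivial_euc (hN : 1 ≤ N) : Nontrivial (EuclideanSpace ℝ (Fin N)) := by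
  refine ⟨⟨0, EuclideanSpace.single (⟨0, hN⟩ : Fin N) (1:ℝ), ?_⟩⟩
  intro h
  have := congrArg norm h
  rw [EuclideanSpace.norm_single] at this
  simp at this

lemma exists_density_pt (hN : 1 ≤ N) {S : Set (EuclideanSpace ℝ (Fin N))}
    (hS : MeasurableSet S) (hpos : 0 < volume S) :
    ∃ x ∈ S, x ≠ 0 ∧ Tendsto (fun r => volume (S ∩ closedBall x r) / volume (closedBall x r))
      (𝓝[>] 0) (𝓝 1) := by
  haveI := nontrivial_euc hN
  have hd := Besicovitch.ae_tendsto_measure_inter_div (volume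
    (α := EuclideanSpace ℝ (Fin N))) S
  have hmem : ∀ᵐ x ∂(volume.restrict S), x ∈ S := ae_restrict_mem hS
  have hne : ∀ᵐ x ∂(volume.restrict S), x ≠ (0 : EuclideanSpace ℝ (Fin N)) := by
    rw [ae_iff]
    have h0 : volume ({(0 : EuclideanSpace ℝ (Fin N))}) = 0 := measure_singleton 0
    have : {a : EuclideanSpace ℝ (Fin N) | ¬ a ≠ 0} = {0} := by ext z; simp
    rw [this]
    exact le_antisymm ((Measure.restrict_le_self (s := S)) _ |>.trans h0.le) (by simp)
  haveI : NeBot (ae (volume.restrict S)) := by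
    rw [ae_neBot]
    intro hzero
    rw [← Measure.restrict_apply_univ S, hzero] at hpos
    simp at hpos
  obtain ⟨x, hx⟩ := ((hmem.and hne).and hd).exists
  exact ⟨x, hx.1.1, hx.1.2, hx.2⟩

lemma half_lt_of_ratio {S : Set (EuclideanSpace ℝ (Fin N))} {x : EuclideanSpace ℝ (Fin N)}
    {ε : ℝ} (hε : 0 < ε)
    (h : 1/2 < volume (S ∩ closedBall x ε) / volume (closedBall x ε)) :
    volume (closedBall x ε) / 2 < volume (S ∩ closedBall x ε) := by
  have h0 : volume (closedBall x ε) ≠ 0 :=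
    ((measure_ball_pos volume x hε).trans_le (measure_mono ball_subset_closedBall)).ne'
  have htop : volume (closedBall x ε) ≠ ∞ := measure_closedBall_lt_top.ne
  have := (ENNReal.mul_lt_mul_iff_left h0 htop).2 h
  rwa [ENNReal.div_mul_cancel h0 htop, one_div, mul_comm, ← div_eq_mul_inv] at this

lemma ae_eq_ball_of_reach (hN : 1 ≤ N) {E : Set (EuclideanSpace ℝ (Fin N))}
    (hE : MeasurableSet E) (hfin : volume E ≠ ∞) {r : ℝ}
    (hvol : volume (ball (0 : EuclideanSpace ℝ (Fin N)) r) = volume E)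
    (hreach : ∀ x y : EuclideanSpace ℝ (Fin N), ‖y‖ < ‖x‖ → Reach E x y) :
    E =ᵐ[volume] ball (0 : EuclideanSpace ℝ (Fin N)) r := by
  set B := ball (0 : EuclideanSpace ℝ (Fin N)) r with hB
  have hfinB : volume B ≠ ∞ := by rw [hvol]; exact hfin
  have hinterfin : volume (E ∩ B) ≠ ∞ := (measure_mono inter_subset_left).trans_lt hfin.lt_top |>.ne
  have key : volume (E \ B) = volume (B \ E) := by
    have k1 : volume (E ∩ B) + volume (E \ B) = volume E := measure_inter_add_diff E measurableSet_ball
    have k2 : volume (B ∩ E) + volume (B \ E) = volume B := measure_inter_add_diff B hE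
    rw [inter_comm] at k2
    rw [← hvol] at k1
    rw [← k2] at k1
    exact ((ENNReal.add_right_inj hinterfin).1 k1.symm).symm
  rw [MeasureTheory.ae_eq_set]
  rcases eq_or_ne (volume (E \ B)) 0 with hzero | hne
  · exact ⟨hzero, key ▸ hzero⟩
  exfalso
  have hpos1 : 0 < volume (E \ B) := pos_iff_ne_zero.2 hne
  have hpos0 : 0 < volume (B \ E) := key ▸ hpos1
  obtain ⟨x₁, hx₁S, _, hx₁d⟩ := exists_density_pt hN (hE.diff measurableSet_ball) hpos1
  obtain ⟨y₀, hy₀S, hy₀0, hy₀d⟩ := exists_density_pt hN (measurableSet_ball.diff hE) hpos0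
  have hylt : ‖y₀‖ < ‖x₁‖ := by
    have h1 : ‖y₀‖ < r := by have := hy₀S.1; rwa [mem_ball_zero_iff] at this
    have h2 : r ≤ ‖x₁‖ := by
      have := hx₁S.2; rw [mem_ball_zero_iff] at this; linarith [not_lt.1 this]
    linarith
  obtain ⟨T, ε₀, hε₀, hm, hiso, hTx, haeT⟩ := hreach x₁ y₀ hylt
  -- choose ε
  have hhalf : (1/2 : ℝ≥0∞) < 1 := by norm_num
  have F1 : ∀ᶠ ε in 𝓝[>] (0:ℝ),
      1/2 < volume ((E \ B) ∩ closedBall x₁ ε) / volume (closedBall x₁ ε) :=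
    hx₁d.eventually (lt_mem_nhds hhalf)
  have F2 : ∀ᶠ ε in 𝓝[>] (0:ℝ),
      1/2 < volume ((B \ E) ∩ closedBall y₀ ε) / volume (closedBall y₀ ε) :=
    hy₀d.eventually (lt_mem_nhds hhalf)
  have F3 : ∀ᶠ ε in 𝓝[>] (0:ℝ), ε ∈ Ioo 0 ε₀ :=
    Ioo_mem_nhdsGT_of_mem ⟨le_refl 0, hε₀⟩
  obtain ⟨ε, ⟨h1, h2⟩, hεIoo⟩ := ((F1.and F2).and F3).exists
  obtain ⟨hεpos, hεlt⟩ := hεIoo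
  have hW : volume (closedBall x₁ ε) = volume (closedBall y₀ ε) := by
    haveI := nontrivial_euc hN
    rw [Measure.addHaar_closedBall volume x₁ hεpos.le,
      Measure.addHaar_closedBall volume y₀ hεpos.le]
  set V := volume (closedBall y₀ ε) with hV
  have hq1 : V / 2 < volume (E ∩ closedBall x₁ ε) := by
    have := half_lt_of_ratio hεpos h1
    rw [hW] at this
    exact this.trans_le (measure_mono (inter_subset_inter_left _ diff_subset))
  have hq2 : V / 2 < volume ((B \ E) ∩ closedBall y₀ ε) := half_lt_of_ratio hεpos h2
  -- transfer mass from x₁ to y₀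
  have hGnull : volume {z | ¬ (z ∈ ball x₁ ε₀ → z ∈ E → T z ∈ E)} = 0 := by
    rw [← ae_iff] ; exact haeT
  have hsub : (E ∩ closedBall x₁ ε) ∩ {z | z ∈ ball x₁ ε₀ → z ∈ E → T z ∈ E}
      ⊆ T ⁻¹' (E ∩ closedBall y₀ ε) := by
    rintro z ⟨⟨hzE, hzb⟩, hzG⟩
    have hzball : z ∈ ball x₁ ε₀ := lt_of_le_of_lt (mem_closedBall.1 hzb) hεlt
    refine ⟨hzG hzball hzE, ?_⟩
    rw [mem_closedBall, ← hTx]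
    rw [hiso.dist_eq]
    exact mem_closedBall.1 hzb
  have hq3 : V / 2 < volume (E ∩ closedBall y₀ ε) := by
    have e1 : volume ((E ∩ closedBall x₁ ε) ∩ {z | z ∈ ball x₁ ε₀ → z ∈ E → T z ∈ E})
        = volume (E ∩ closedBall x₁ ε) := measure_inter_conull hGnull
    have e2 : volume (T ⁻¹' (E ∩ closedBall y₀ ε)) = volume (E ∩ closedBall y₀ ε) :=
      hm.measure_preimage ((hE.inter measurableSet_closedBall).nullMeasurableSet)
    calc V / 2 < volume (E ∩ closedBall x₁ ε) := hq1
    _ = volume ((E ∩ closedBall x₁ ε) ∩ _) := e1.symm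
    _ ≤ volume (T ⁻¹' (E ∩ closedBall y₀ ε)) := measure_mono hsub
    _ = volume (E ∩ closedBall y₀ ε) := e2
  have hdisj : Disjoint (E ∩ closedBall y₀ ε) ((B \ E) ∩ closedBall y₀ ε) := by
    apply Set.disjoint_left.2
    rintro z ⟨hzE, _⟩ ⟨⟨_, hzE'⟩, _⟩
    exact hzE' hzE
  have hunion : volume (E ∩ closedBall y₀ ε) + volume ((B \ E) ∩ closedBall y₀ ε) ≤ V := by
    rw [← measure_union hdisj ((measurableSet_ball.diff hE).inter measurableSet_closedBall)]
    exact measure_mono (union_subset inter_subset_right inter_subset_right)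
  have : V < V := by
    calc V = V / 2 + V / 2 := (ENNReal.add_halves V).symm
    _ < volume (E ∩ closedBall y₀ ε) + volume ((B \ E) ∩ closedBall y₀ ε) :=
        ENNReal.add_lt_add hq3 hq2
    _ ≤ V := hunion
  exact lt_irrefl _ this


lemma reflectH_neg (a : EuclideanSpace ℝ (Fin N)) (x) :
    reflectH (-a) 0 x = reflectH a 0 x := by
  rw [reflectH, reflectH, inner_neg_left]
  rw [smul_neg, ← neg_smul]
  congr 2
  ring

lemma ae_refl0 (hρ : 0 < ρ)
    (hpol : ∀ (a : EuclideanSpace ℝ (Fin N)) (b : ℝ), ‖a‖ = 1 → 0 ≤ b → b < ρ →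
      polarization a b u =ᵐ[volume] u)
    (a : EuclideanSpace ℝ (Fin N)) (ha : ‖a‖ = 1) :
    ∀ᵐ x ∂volume, u (reflectH a 0 x) = u x := by
  have ha' : ‖-a‖ = 1 := by rwa [norm_neg]
  filter_upwards [hpol a 0 ha le_rfl hρ, hpol (-a) 0 ha' le_rfl hρ] with x h1 h2
  rw [polarization] at h1 h2
  rw [reflectH_neg, inner_neg_left] at h2
  rcases lt_trichotomy ((inner ℝ a x : ℝ)) 0 with hc | hc | hc
  · rw [if_pos hc.le] at h1
    rw [if_neg (by rw [not_le]; linarith)] at h2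
    have l1 := le_max_right (u x) (u (reflectH a 0 x))
    rw [h1] at l1
    have l2 := min_le_right (u x) (u (reflectH a 0 x))
    rw [h2] at l2
    linarith
  · have : reflectH a 0 x = x := by
      rw [reflectH, hc]
      norm_num
    rw [this]
  · rw [if_neg (by rw [not_le]; linarith)] at h1
    rw [if_pos (by linarith)] at h2
    have l1 := le_max_right (u x) (u (reflectH a 0 x))
    rw [h2] at l1
    have l2 := min_le_right (u x) (u (reflectH a 0 x))
    rw [h1] at l2
    linarith

lemma ae_far (hρ : 0 < ρ)
    (hpol : ∀ (a : EuclideanSpace ℝ (Fin N)) (b : ℝ), ‖a‖ = 1 → 0 ≤ b → b < ρ →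
      polarization a b u =ᵐ[volume] u)
    (a : EuclideanSpace ℝ (Fin N)) (b : ℝ) (ha : ‖a‖ = 1) (hb0 : 0 < b) (hbρ : b < ρ) :
    ∀ᵐ x ∂volume, b < (inner ℝ a x : ℝ) → u x ≤ u (reflectH a b x) := by
  filter_upwards [hpol a b ha hb0.le hbρ] with x h1 hfar
  rw [polarization, if_neg (not_le.2 hfar)] at h1
  have := min_le_right (u x) (u (reflectH a b x))
  rw [h1] at this
  exact this

lemma volume_ball_lt_iff (hN : 1 ≤ N) {s t : ℝ} (hs : 0 ≤ s) (ht : 0 ≤ t) :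
    volume (ball (0 : EuclideanSpace ℝ (Fin N)) s) < volume (ball (0 : EuclideanSpace ℝ (Fin N)) t)
      ↔ s < t := by
  haveI := nontrivial_euc hN
  have hc0 : volume (ball (0 : EuclideanSpace ℝ (Fin N)) 1) ≠ 0 :=
    (measure_ball_pos volume 0 one_pos).ne'
  have hctop : volume (ball (0 : EuclideanSpace ℝ (Fin N)) 1) ≠ ⊤ := measure_ball_lt_top.ne
  rw [Measure.addHaar_ball volume _ hs, Measure.addHaar_ball volume _ ht]
  rw [ENNReal.mul_lt_mul_iff_left hc0 hctop]
  rw [ENNReal.ofReal_lt_ofReal_iff_of_nonneg (by positivity)]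
  rw [finrank_euclideanSpace_fin]
  exact pow_lt_pow_iff_left₀ hs ht (by omega)

lemma volume_ball_rad (hN : 1 ≤ N) {m : ℝ} (hm : 0 ≤ m) :
    volume (ball (0 : EuclideanSpace ℝ (Fin N))
      ((m / (volume (ball (0 : EuclideanSpace ℝ (Fin N)) 1)).toReal) ^ ((1:ℝ)/N)))
      = ENNReal.ofReal m := by
  haveI := nontrivial_euc hN
  set c := volume (ball (0 : EuclideanSpace ℝ (Fin N)) 1) with hc
  have hc0 : c ≠ 0 := (measure_ball_pos volume 0 one_pos).ne'
  have hctop : c ≠ ⊤ := measure_ball_lt_top.ne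
  have hcT : 0 < c.toReal := ENNReal.toReal_pos hc0 hctop
  have hdiv : 0 ≤ m / c.toReal := by positivity
  have hrn : (0:ℝ) ≤ (m / c.toReal) ^ ((1:ℝ)/N) := Real.rpow_nonneg hdiv _
  rw [Measure.addHaar_ball volume _ hrn, finrank_euclideanSpace_fin]
  have hpow : ((m / c.toReal) ^ ((1:ℝ)/N)) ^ (N : ℕ) = m / c.toReal := by
    rw [← Real.rpow_natCast ((m / c.toReal) ^ ((1:ℝ)/N)) N, ← Real.rpow_mul hdiv]
    rw [one_div, inv_mul_cancel₀ (by exact_mod_cast (by omega : N ≠ 0))]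
    exact Real.rpow_one _
  rw [hpow, ENNReal.ofReal_div_of_pos hcT, ENNReal.ofReal_toReal hctop]
  exact ENNReal.div_mul_cancel hc0 hctop

end Helpers

section Main
open Topology Metric Set ENNReal

/-- For nonnegative `u ∈ L^p(ℝ^N)` and `ρ > 0`: if `u^H = u` a.e. for every
closed halfspace `H = {x : ⟪a,x⟫ ≤ b}` with `0 ∈ H` whose boundary meets `B(0,ρ)`
(i.e. `0 ≤ b < ρ`), then `u = u⋆` a.e. -/
theorem statement7 {N : ℕ} (hN : 1 ≤ N) (p : ℝ) (hp : 1 ≤ p) (ρ : ℝ) (hρ : 0 < ρ)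
    (u : EuclideanSpace ℝ (Fin N) → ℝ)
    (hu : MemLp u (ENNReal.ofReal p) volume) (hu0 : ∀ x, 0 ≤ u x)
    (hpol : ∀ (a : EuclideanSpace ℝ (Fin N)) (b : ℝ), ‖a‖ = 1 → 0 ≤ b → b < ρ →
      polarization a b u =ᵐ[volume] u) :
    u =ᵐ[volume] schwarz u := by
  classical
  haveI := nontrivial_euc hN
  set w : EuclideanSpace ℝ (Fin N) → ℝ := hu.1.mk u with hwdef
  have hwsm : StronglyMeasurable w := hu.1.stronglyMeasurable_mk
  have huw : u =ᵐ[volume] w := hu.1.ae_eq_mk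
  have hwmeas : Measurable w := hwsm.measurable
  have hwLp : MemLp w (ENNReal.ofReal p) volume := hu.ae_eq huw
  set E : ℝ → Set (EuclideanSpace ℝ (Fin N)) := fun q => {x | q < w x} with hEdef
  have hEmeas : ∀ q, MeasurableSet (E q) := fun q => measurableSet_lt measurable_const hwmeas
  have hEmono : ∀ {q q' : ℝ}, q ≤ q' → E q' ⊆ E q := by
    intro q q' h x hx
    exact lt_of_le_of_lt h hx
  have hp0 : (ENNReal.ofReal p) ≠ 0 := (ENNReal.ofReal_pos.2 (by linarith)).ne'
  have hptop : (ENNReal.ofReal p) ≠ ⊤ := ENNReal.ofReal_ne_top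
  have hfin : ∀ q : ℝ, 0 < q → volume (E q) ≠ ⊤ := by
    intro q hq
    have hsub : E q ⊆ {x | ENNReal.ofReal q ≤ ‖w x‖₊} := by
      intro x hx
      have h1 : q ≤ ‖w x‖ := le_trans (le_of_lt hx) (le_abs_self _)
      have : ENNReal.ofReal q ≤ ENNReal.ofReal ‖w x‖ := ENNReal.ofReal_le_ofReal h1
      rwa [ofReal_norm] at this
    exact ((measure_mono hsub).trans_lt
      (hwLp.meas_ge_lt_top' hp0 hptop (ENNReal.ofReal_pos.2 hq).ne')).ne
  set c : ℝ≥0∞ := volume (Metric.ball (0 : EuclideanSpace ℝ (Fin N)) 1) with hcdef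
  have hc0 : c ≠ 0 := (measure_ball_pos volume 0 one_pos).ne'
  have hctop : c ≠ ⊤ := measure_ball_lt_top.ne
  have hcT : 0 < c.toReal := ENNReal.toReal_pos hc0 hctop
  set rad : ℝ → ℝ := fun q => ((volume (E q)).toReal / c.toReal) ^ ((1:ℝ)/N) with hraddef
  have hrad0 : ∀ q, 0 ≤ rad q := fun q => Real.rpow_nonneg (by positivity) _
  have hballrad : ∀ q : ℝ, 0 < q →
      volume (Metric.ball (0 : EuclideanSpace ℝ (Fin N)) (rad q)) = volume (E q) := by
    intro q hq
    rw [hraddef]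
    rw [volume_ball_rad hN ENNReal.toReal_nonneg]
    exact ENNReal.ofReal_toReal (hfin q hq)
  have hAw : ∀ a : EuclideanSpace ℝ (Fin N), ‖a‖ = 1 →
      ∀ᵐ x ∂volume, w (reflectH a 0 x) = w x := by
    intro a ha
    filter_upwards [ae_refl0 hρ hpol a ha, huw,
      ae_comp_mp (measurePreserving_reflectH a 0 ha) huw] with x h1 h2 h3
    rw [← h3, h1, h2]
  have hBw : ∀ (a : EuclideanSpace ℝ (Fin N)) (b : ℝ), ‖a‖ = 1 → 0 < b → b < ρ →
      ∀ᵐ x ∂volume, b < (inner ℝ a x : ℝ) → w x ≤ w (reflectH a b x) := by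
    intro a b ha hb0 hbρ
    filter_upwards [ae_far hρ hpol a b ha hb0 hbρ, huw,
      ae_comp_mp (measurePreserving_reflectH a b ha) huw] with x h1 h2 h3 hfar
    rw [← h3, ← h2]
    exact h1 hfar
  have hkey : ∀ q : ℝ, 0 < q →
      E q =ᵐ[volume] Metric.ball (0 : EuclideanSpace ℝ (Fin N)) (rad q) := by
    intro q hq
    apply ae_eq_ball_of_reach hN (hEmeas q) (hfin q hq) (hballrad q hq)
    intro x y hxy
    refine reach_of_norm_lt (ρ := ρ) ?_ ?_ hρ hN hxy
    · intro a ha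
      filter_upwards [hAw a ha] with z hz
      constructor
      · intro h
        show q < w (reflectH a 0 z)
        rw [hz]
        exact h
      · intro h
        have h' : q < w (reflectH a 0 z) := h
        rw [hz] at h'
        exact h'
    · intro a b ha hb0 hbρ
      filter_upwards [hBw a b ha hb0 hbρ] with z hz hfar hzE
      exact lt_of_lt_of_le hzE (hz hfar)
  have hradmono : ∀ {q q' : ℝ}, 0 < q → q ≤ q' → rad q' ≤ rad q := by
    intro q q' hq h
    apply Real.rpow_le_rpow (by positivity) ?_ (by positivity)
    apply (div_le_div_iff_of_pos_right hcT).2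
    exact ENNReal.toReal_mono (hfin q hq) (measure_mono (hEmono h))
  have hradtend : ∀ q : ℝ, 0 < q →
      Tendsto (fun n : ℕ => rad (q + 1/(n+1))) atTop (𝓝 (rad q)) := by
    intro q hq
    have hunion : (⋃ n : ℕ, E (q + 1/(n+1))) = E q := by
      ext x
      simp only [Set.mem_iUnion]
      constructor
      · rintro ⟨n, hn⟩
        have hpos : (0:ℝ) < 1/((n:ℝ)+1) := by positivity
        have hn' : q + 1/((n:ℝ)+1) < w x := hn
        show q < w x
        linarith
      · intro hx
        have hx' : q < w x := hx
        obtain ⟨n, hn⟩ := exists_nat_one_div_lt (sub_pos.2 hx')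
        exact ⟨n, show q + 1/((n:ℝ)+1) < w x by linarith⟩
    have hmonoseq : Monotone (fun n : ℕ => E (q + 1/(n+1))) := by
      intro n m hnm
      apply hEmono
      have h1 : (1:ℝ)/((m:ℝ)+1) ≤ 1/((n:ℝ)+1) := by
        apply one_div_le_one_div_of_le (by positivity)
        have : (n:ℝ) ≤ (m:ℝ) := by exact_mod_cast hnm
        linarith
      linarith
    have h1 : Tendsto (fun n : ℕ => volume (E (q + 1/(n+1)))) atTop (𝓝 (volume (E q))) := by
      rw [← hunion]
      exact tendsto_measure_iUnion_atTop hmonoseq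
    have h2 : Tendsto (fun n : ℕ => (volume (E (q + 1/(n+1)))).toReal) atTop
        (𝓝 ((volume (E q)).toReal)) :=
      (ENNReal.tendsto_toReal (hfin q hq)).comp h1
    have h3 : ContinuousAt (fun t : ℝ => (t / c.toReal) ^ ((1:ℝ)/N)) ((volume (E q)).toReal) := by
      have hN0 : (0:ℝ) ≤ 1/(N:ℝ) := by positivity
      exact ((continuous_id.div_const c.toReal).continuousAt).rpow_const (Or.inr hN0)
    exact h3.tendsto.comp h2
  have hμu : ∀ l : ℝ, volume {y | l < u y} = volume (E l) := by
    intro l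
    apply measure_congr
    filter_upwards [huw] with x hx
    change (l < u x) = (l < w x)
    rw [hx]
  have hne0 : ∀ᵐ x : EuclideanSpace ℝ (Fin N) ∂volume, x ≠ 0 := by
    rw [ae_iff]
    have h0 : {x : EuclideanSpace ℝ (Fin N) | ¬ x ≠ 0} = {0} := by ext z; simp
    rw [h0]
    exact measure_singleton 0
  have hiter : ∀ᵐ x : EuclideanSpace ℝ (Fin N) ∂volume, ∀ q : ℚ, 0 < (q:ℝ) →
      (x ∈ E (q:ℝ) ↔ x ∈ Metric.ball (0 : EuclideanSpace ℝ (Fin N)) (rad (q:ℝ))) := by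
    rw [ae_all_iff]
    intro q
    by_cases hq : 0 < (q:ℝ)
    · filter_upwards [Filter.eventuallyEq_set.1 (hkey (q:ℝ) hq)] with x hx _
      exact hx
    · exact Filter.Eventually.of_forall (fun x h => absurd h hq)
  have hEtend : Tendsto (fun n : ℕ => volume (E ((n:ℝ)+1))) atTop (𝓝 0) := by
    have hinter : (⋂ n : ℕ, E ((n:ℝ)+1)) = ∅ := by
      ext x
      simp only [Set.mem_iInter, Set.mem_empty_iff_false, iff_false, not_forall]
      obtain ⟨n, hn⟩ := exists_nat_gt (w x)
      refine ⟨n, ?_⟩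
      show ¬ ((n:ℝ)+1 < w x)
      push_neg
      linarith
    have hanti : Antitone (fun n : ℕ => E ((n:ℝ)+1)) := by
      intro n m hnm
      apply hEmono
      have : (n:ℝ) ≤ (m:ℝ) := by exact_mod_cast hnm
      linarith
    have h := tendsto_measure_iInter_atTop (μ := volume)
      (fun n : ℕ => (hEmeas ((n:ℝ)+1)).nullMeasurableSet) hanti
      ⟨0, by simpa using hfin 1 one_pos⟩
    rw [hinter] at h
    simpa [Function.comp_def] using h
  filter_upwards [huw, hne0, hiter] with x hxw hx0 hxq
  show u x = schwarz u x
  have hnx : 0 < ‖x‖ := norm_pos_iff.2 hx0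
  have hwx0 : 0 ≤ w x := hxw ▸ hu0 x
  set S : Set ℝ := {l : ℝ | 0 < l ∧
    volume (Metric.ball (0 : EuclideanSpace ℝ (Fin N)) ‖x‖) < volume {y | l < u y}} with hSdef
  have hsch : schwarz u x = sSup S := rfl
  have hSmem : ∀ l : ℝ, 0 < l → (l ∈ S ↔ ‖x‖ < rad l) := by
    intro l hl
    rw [hSdef, Set.mem_setOf_eq, hμu l, ← hballrad l hl]
    simp only [hl, true_and]
    exact volume_ball_lt_iff hN (norm_nonneg x) (hrad0 l)
  have hSbdd : BddAbove S := by
    have hbpos : 0 < volume (Metric.ball (0 : EuclideanSpace ℝ (Fin N)) ‖x‖) :=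
      measure_ball_pos volume 0 hnx
    obtain ⟨n, hn⟩ := (hEtend.eventually (gt_mem_nhds hbpos)).exists
    refine ⟨(n:ℝ)+1, fun l hl => ?_⟩
    by_contra hcon
    push_neg at hcon
    have h1 : volume {y | l < u y} ≤ volume (E ((n:ℝ)+1)) := by
      rw [hμu l]
      exact measure_mono (hEmono hcon.le)
    exact lt_irrefl _ ((hl.2.trans_le h1).trans hn)
  have hchar : ∀ cr : ℝ, 0 ≤ cr → (cr < schwarz u x ↔ ∃ l, cr < l ∧ ‖x‖ < rad l) := by
    intro cr hcr
    constructor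
    · intro h
      rcases S.eq_empty_or_nonempty with hS | hS
      · exfalso
        rw [hsch, hS, Real.sSup_empty] at h
        exact absurd h (not_lt.2 hcr)
      · rw [hsch] at h
        obtain ⟨l, hlS, hcl⟩ := exists_lt_of_lt_csSup hS h
        exact ⟨l, hcl, (hSmem l hlS.1).1 hlS⟩
    · rintro ⟨l, hcl, hrl⟩
      have hl0 : 0 < l := lt_of_le_of_lt hcr hcl
      have hlS : l ∈ S := (hSmem l hl0).2 hrl
      rw [hsch]
      exact lt_of_lt_of_le hcl (le_csSup hSbdd hlS)
  have hiff : ∀ q : ℚ, 0 < (q:ℝ) → ((q:ℝ) < w x ↔ (q:ℝ) < schwarz u x) := by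
    intro q hq
    have h2 : x ∈ E (q:ℝ) ↔ ‖x‖ < rad (q:ℝ) := by
      rw [hxq q hq, mem_ball_zero_iff]
    have h1 : (q:ℝ) < w x ↔ ‖x‖ < rad (q:ℝ) := h2
    rw [h1, hchar (q:ℝ) hq.le]
    constructor
    · intro h
      obtain ⟨n, hn⟩ := ((hradtend (q:ℝ) hq).eventually (lt_mem_nhds h)).exists
      refine ⟨(q:ℝ) + 1/((n:ℝ)+1), ?_, hn⟩
      have : (0:ℝ) < 1/((n:ℝ)+1) := by positivity
      linarith
    · rintro ⟨l, hql, hl⟩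
      exact lt_of_lt_of_le hl (hradmono hq hql.le)
  have hsch0 : 0 ≤ schwarz u x := by
    rw [hsch]
    apply Real.sSup_nonneg
    intro l hl
    exact hl.1.le
  have hfinal : w x = schwarz u x := by
    by_contra hne
    rcases lt_or_gt_of_ne hne with hlt | hgt
    · obtain ⟨q, hq1, hq2⟩ := exists_rat_btwn hlt
      have hq0 : 0 < (q:ℝ) := lt_of_le_of_lt hwx0 hq1
      exact absurd ((hiff q hq0).2 hq2) (not_lt.2 hq1.le)
    · obtain ⟨q, hq1, hq2⟩ := exists_rat_btwn hgt
      have hq0 : 0 < (q:ℝ) := lt_of_le_of_lt hsch0 hq1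
      exact absurd ((hiff q hq0).1 hq2) (not_lt.2 hq1.le)
  rw [hxw, hfinal]

end Main
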